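/- Let Λ be a finite label set and let L be a regular tree language over Λ. Then the set B_L = { X # Y | X ∈ L, Y ∈ L, and the pair (X, Y) is L-semibad } (the language of L-bad pairs) is a regular tree language over Option Λ. -/

import Mathlib

/-- A finite rooted labeled binary tree over label set `Λ`. -/
inductive LTree (Λ : Type) : Type
  | leaf : Λ → LTree Λ
  | node : Λ → LTree Λ → LTree Λ → LTree Λ

/-- Topological containment of rooted labeled binary trees: the least relation such that
(i) `leaf a ≼ leaf a`; (ii) `leaf a ≼ node a T₁ T₂`; (iii) if `U ≼ T₁` or `U ≼ T₂` then
`U ≼ node b T₁ T₂`; (iv) if (`U₁ ≼ T₁` and `U₂ ≼ T₂`) or (`U₁ ≼ T₂` and `U₂ ≼ T₁`) then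
`node a U₁ U₂ ≼ node a T₁ T₂`.  (The disjunctive rules are split into two constructors each.) -/
inductive TopCont {Λ : Type} : LTree Λ → LTree Λ → Prop
  | leaf_leaf (a : Λ) : TopCont (.leaf a) (.leaf a)
  | leaf_node (a : Λ) (T₁ T₂ : LTree Λ) : TopCont (.leaf a) (.node a T₁ T₂)
  | subtree_left (U : LTree Λ) (b : Λ) (T₁ T₂ : LTree Λ) :
      TopCont U T₁ → TopCont U (.node b T₁ T₂)
  | subtree_right (U : LTree Λ) (b : Λ) (T₁ T₂ : LTree Λ) :
      TopCont U T₂ → TopCont U (.node b T₁ T₂)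
  | node_node (a : Λ) (U₁ U₂ T₁ T₂ : LTree Λ) :
      TopCont U₁ T₁ → TopCont U₂ T₂ → TopCont (.node a U₁ U₂) (.node a T₁ T₂)
  | node_node_swap (a : Λ) (U₁ U₂ T₁ T₂ : LTree Λ) :
      TopCont U₁ T₂ → TopCont U₂ T₁ → TopCont (.node a U₁ U₂) (.node a T₁ T₂)

/-- A deterministic bottom-up tree automaton over label set `Λ`. -/
structure TreeAutomaton (Λ : Type) where
  State : Type
  fintypeState : Fintype State
  accept : Set State
  m0 : Λ → State
  m2 : Λ → State → State → State
  m2_comm : ∀ a s t, m2 a s t = m2 a t s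

/-- The run of a tree automaton on a tree. -/
def TreeAutomaton.run {Λ : Type} (M : TreeAutomaton Λ) : LTree Λ → M.State
  | .leaf a => M.m0 a
  | .node a T₁ T₂ => M.m2 a (M.run T₁) (M.run T₂)

/-- A tree automaton accepts a tree if its run ends in an accepting state. -/
def TreeAutomaton.Accepts {Λ : Type} (M : TreeAutomaton Λ) (T : LTree Λ) : Prop :=
  M.run T ∈ M.accept

/-- A set of trees is a regular tree language if some tree automaton accepts
exactly the trees in it. -/
def IsRegularTreeLang {Λ : Type} (L : Set (LTree Λ)) : Prop :=
  ∃ M : TreeAutomaton Λ, ∀ T, T ∈ L ↔ M.Accepts T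

/-- Relabel a tree by applying `f` to every label. -/
def LTree.relabel {Λ Λ' : Type} (f : Λ → Λ') : LTree Λ → LTree Λ'
  | .leaf a => .leaf (f a)
  | .node a T₁ T₂ => .node (f a) (relabel f T₁) (relabel f T₂)

/-- `X # Y`: a root labeled `none` with child subtrees the `some`-relabelings of `X` and `Y`. -/
def LTree.hash {Λ : Type} (X Y : LTree Λ) : LTree (Option Λ) :=
  .node none (X.relabel some) (Y.relabel some)

/-- `(X, Y)` is an `L`-semibad pair if no `Z ∈ L` topologically contains both `X` and `Y`. -/
def Semibad {Λ : Type} (L : Set (LTree Λ)) (X Y : LTree Λ) : Prop :=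
  ¬ ∃ Z ∈ L, TopCont X Z ∧ TopCont Y Z


namespace BadAux

variable {Λ : Type}

def sz : LTree Λ → ℕ
  | .leaf _ => 1
  | .node _ t₁ t₂ => 1 + sz t₁ + sz t₂

theorem topCont_refl (T : LTree Λ) : TopCont T T := by
  induction T with
  | leaf a => exact .leaf_leaf a
  | node a T₁ T₂ ih₁ ih₂ => exact .node_node a T₁ T₂ T₁ T₂ ih₁ ih₂

theorem topCont_trans : ∀ {W U V : LTree Λ}, TopCont U V → TopCont V W → TopCont U W := by
  intro W
  induction W with
  | leaf b =>
    intro U V d₁ d₂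
    cases d₂ with
    | leaf_leaf => exact d₁
  | node b W₁ W₂ ih₁ ih₂ =>
    intro U V d₁ d₂
    cases d₂ with
    | leaf_node =>
      cases d₁ with
      | leaf_leaf => exact .leaf_node _ _ _
    | subtree_left _ _ _ _ h => exact .subtree_left _ _ _ _ (ih₁ d₁ h)
    | subtree_right _ _ _ _ h => exact .subtree_right _ _ _ _ (ih₂ d₁ h)
    | node_node _ V₁ V₂ _ _ h₁ h₂ =>
      cases d₁ with
      | leaf_node => exact .leaf_node _ _ _
      | subtree_left _ _ _ _ g => exact .subtree_left _ _ _ _ (ih₁ g h₁)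
      | subtree_right _ _ _ _ g => exact .subtree_right _ _ _ _ (ih₂ g h₂)
      | node_node _ _ _ _ _ g₁ g₂ => exact .node_node _ _ _ _ _ (ih₁ g₁ h₁) (ih₂ g₂ h₂)
      | node_node_swap _ _ _ _ _ g₁ g₂ =>
        exact .node_node_swap _ _ _ _ _ (ih₂ g₁ h₂) (ih₁ g₂ h₁)
    | node_node_swap _ V₁ V₂ _ _ h₁ h₂ =>
      cases d₁ with
      | leaf_node => exact .leaf_node _ _ _
      | subtree_left _ _ _ _ g => exact .subtree_right _ _ _ _ (ih₂ g h₁)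
      | subtree_right _ _ _ _ g => exact .subtree_left _ _ _ _ (ih₁ g h₂)
      | node_node _ _ _ _ _ g₁ g₂ =>
        exact .node_node_swap _ _ _ _ _ (ih₂ g₁ h₁) (ih₁ g₂ h₂)
      | node_node_swap _ _ _ _ _ g₁ g₂ =>
        exact .node_node _ _ _ _ _ (ih₁ g₁ h₂) (ih₂ g₂ h₁)

instance : IsRefl (LTree Λ) TopCont := ⟨topCont_refl⟩
instance : IsTrans (LTree Λ) TopCont := ⟨fun _ _ _ h₁ h₂ => topCont_trans h₁ h₂⟩
instance : IsPreorder (LTree Λ) TopCont where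
  refl := topCont_refl
  trans := fun _ _ _ h₁ h₂ => topCont_trans h₁ h₂

theorem isChild_topCont {T P : LTree Λ} (h : ∃ a T', P = .node a T T' ∨ P = .node a T' T) :
    TopCont T P := by
  obtain ⟨a, T', h | h⟩ := h <;> subst h
  · exact .subtree_left _ _ _ _ (topCont_refl T)
  · exact .subtree_right _ _ _ _ (topCont_refl T)

theorem isChild_sz {T P : LTree Λ} (h : ∃ a T', P = .node a T T' ∨ P = .node a T' T) :
    sz T < sz P := by
  obtain ⟨a, T', h | h⟩ := h <;> subst h <;> simp [sz] <;> omega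

end BadAux

namespace BadAux
open Set

theorem exists_node_of_not_leaf {Λ : Type} {T : LTree Λ} (h : ¬∃ a, T = .leaf a) :
    ∃ a l r, T = .node a l r := by
  cases T with
  | leaf a => exact absurd ⟨a, rfl⟩ h
  | node a l r => exact ⟨a, l, r, rfl⟩

theorem topCont_pwo {Λ : Type} [Fintype Λ] :
    (Set.univ : Set (LTree Λ)).PartiallyWellOrderedOn TopCont := by
  classical
  rw [Set.PartiallyWellOrderedOn.iff_not_exists_isMinBadSeq sz]
  rintro ⟨f, hf, hmin⟩
  -- the set of children of elements of the minimal bad sequence is pwo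
  set S : Set (LTree Λ) := {T | ∃ n a T', f n = .node a T T' ∨ f n = .node a T' T} with hSdef
  have hSpwo : S.PartiallyWellOrderedOn TopCont := by
    rw [Set.partiallyWellOrderedOn_iff_exists_lt]
    intro g hg
    by_contra H
    push_neg at H
    choose n hn using hg
    have hex : ∃ m, ∃ k, n k = m := ⟨n 0, 0, rfl⟩
    obtain ⟨k₀, hk₀⟩ := Nat.find_spec hex
    have hminn : ∀ k, Nat.find hex ≤ n k := fun k => Nat.find_le ⟨k, rfl⟩
    set m₀ := Nat.find hex with hm₀
    -- combined sequence
    set h : ℕ → LTree Λ := fun m => if m < m₀ then f m else g (k₀ + (m - m₀)) with hh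
    have hchild : ∀ k, TopCont (g k) (f (n k)) := fun k => isChild_topCont (hn k)
    have hbad : Set.PartiallyWellOrderedOn.IsBadSeq TopCont Set.univ h := by
      refine ⟨fun _ => trivial, fun i j hij hr => ?_⟩
      by_cases hj : j < m₀
      · rw [hh] at hr
        simp only [if_pos hj, if_pos (hij.trans hj)] at hr
        exact hf.2 i j hij hr
      · push_neg at hj
        by_cases hi : i < m₀
        · rw [hh] at hr
          simp only [if_pos hi, if_neg (not_lt.2 hj)] at hr
          have h2 : TopCont (f i) (f (n (k₀ + (j - m₀)))) :=
            topCont_trans hr (hchild _)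
          exact hf.2 i (n (k₀ + (j - m₀)))
            (lt_of_lt_of_le (hi.trans_le (hk₀ ▸ le_refl m₀)) (hminn _)) h2
        · push_neg at hi
          rw [hh] at hr
          simp only [if_neg (not_lt.2 hi), if_neg (not_lt.2 hj)] at hr
          exact H (k₀ + (i - m₀)) (k₀ + (j - m₀))
            (by omega) hr
    have hsz : sz (h m₀) < sz (f m₀) := by
      have : h m₀ = g k₀ := by simp [hh]
      rw [this, ← hk₀]
      exact isChild_sz (hn k₀)
    exact hmin m₀ h (fun m hm => by simp [hh, if_pos hm]) hsz hbad
  -- main case split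
  by_cases hinf : {m | ∃ a, f m = LTree.leaf a}.Infinite
  · -- infinitely many leaves: pigeonhole on labels
    let e := hinf.natEmbedding
    choose lab hlab using fun i => (e i).2
    obtain ⟨i, j, hij, hlij⟩ := Finite.exists_ne_map_eq_of_infinite lab
    have hne : ((e i : ℕ)) ≠ ((e j : ℕ)) := fun hc => hij (e.injective (Subtype.ext hc))
    have key : ∀ i j : ℕ, (e i : ℕ) < (e j : ℕ) → lab i = lab j → False := by
      intro i j hlt heq
      refine hf.2 _ _ hlt ?_
      rw [hlab i, hlab j, heq]
      exact .leaf_leaf _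
    rcases hne.lt_or_gt with h | h
    · exact key i j h hlij
    · exact key j i h hlij.symm
  · -- cofinitely many nodes
    have hconode : {m | ¬∃ a, f m = LTree.leaf a}.Infinite := by
      rw [Set.not_infinite] at hinf
      have := hinf.infinite_compl
      exact this
    set p : ℕ → Prop := fun m => ¬∃ a, f m = LTree.leaf a with hp
    have hpinf : (setOf p).Infinite := hconode
    set e : ℕ → ℕ := Nat.nth p with he
    have hemono : StrictMono e := Nat.nth_strictMono hpinf
    have hmem : ∀ i, p (e i) := fun i => Nat.nth_mem_of_infinite hpinf i
    choose a l r hnode using fun i => exists_node_of_not_leaf (hmem i)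
    have hlS : ∀ i, l i ∈ S := fun i => ⟨e i, a i, r i, Or.inl (hnode i)⟩
    have hrS : ∀ i, r i ∈ S := fun i => ⟨e i, a i, l i, Or.inr (hnode i)⟩
    obtain ⟨g₁, hg₁⟩ := hSpwo.exists_monotone_subseq (f := l) hlS
    obtain ⟨g₂, hg₂⟩ := hSpwo.exists_monotone_subseq (f := fun i => r (g₁ i)) (fun i => hrS _)
    obtain ⟨i, j, hij, haij⟩ :=
      Finite.exists_ne_map_eq_of_infinite (fun i => a (g₁ (g₂ i)))
    -- wlog i < j
    have key : ∀ i j : ℕ, i < j → a (g₁ (g₂ i)) = a (g₁ (g₂ j)) → False := by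
      intro i j hlt heq
      have h1 : TopCont (l (g₁ (g₂ i))) (l (g₁ (g₂ j))) := hg₁ _ _ ((g₂.le_iff_le).2 hlt.le)
      have h2 : TopCont (r (g₁ (g₂ i))) (r (g₁ (g₂ j))) := hg₂ _ _ hlt.le
      have hcont : TopCont (f (e (g₁ (g₂ i)))) (f (e (g₁ (g₂ j)))) := by
        rw [hnode _, hnode _, heq]
        exact .node_node _ _ _ _ _ h1 h2
      exact hf.2 _ _ (hemono (g₁.strictMono (g₂.strictMono hlt))) hcont
    rcases hij.lt_or_gt with h | h
    · exact key i j h haij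
    · exact key j i h haij.symm

end BadAux

namespace BadAux
variable {Λ : Type} (M : TreeAutomaton Λ)

/-- the set of states of trees containing both `X` and `Y`. -/
def Sset (X Y : LTree Λ) : Set M.State :=
  {s | ∃ Z, M.run Z = s ∧ TopCont X Z ∧ TopCont Y Z}

theorem Sset_comm (X Y : LTree Λ) : Sset M X Y = Sset M Y X := by
  ext s; constructor <;> rintro ⟨Z, h1, h2, h3⟩ <;> exact ⟨Z, h1, h3, h2⟩

theorem Sset_anti_left {X X' : LTree Λ} (h : TopCont X X') (Y : LTree Λ) :
    Sset M X' Y ⊆ Sset M X Y := by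
  rintro s ⟨Z, h1, h2, h3⟩
  exact ⟨Z, h1, topCont_trans h h2, h3⟩

theorem Sset_anti_right {Y Y' : LTree Λ} (X : LTree Λ) (h : TopCont Y Y') :
    Sset M X Y' ⊆ Sset M X Y := by
  rintro s ⟨Z, h1, h2, h3⟩
  exact ⟨Z, h1, h2, topCont_trans h h3⟩

/-- KEY replacement lemma. -/
theorem key_replace {X₁ X₁' X₂ : LTree Λ} {a : Λ}
    (hS : ∀ Y, Sset M X₁ Y = Sset M X₁' Y) :
    ∀ Z Y, TopCont (.node a X₁ X₂) Z → TopCont Y Z →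
      ∃ Z', M.run Z' = M.run Z ∧ TopCont (.node a X₁' X₂) Z' ∧ TopCont Y Z' := by
  intro Z
  induction Z with
  | leaf b => intro Y hX hY; cases hX
  | node b Z₁ Z₂ ih₁ ih₂ =>
    intro Y hX hY
    -- helper to replace inside a subtree Zc that contains X₁ and some V
    have repl : ∀ (Zc V : LTree Λ), TopCont X₁ Zc → TopCont V Zc →
        ∃ Zc', M.run Zc' = M.run Zc ∧ TopCont X₁' Zc' ∧ TopCont V Zc' := by
      intro Zc V h1 h2
      have : M.run Zc ∈ Sset M X₁ V := ⟨Zc, rfl, h1, h2⟩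
      rw [hS V] at this
      obtain ⟨Zc', e1, e2, e3⟩ := this
      exact ⟨Zc', e1, e2, e3⟩
    cases hX with
    | subtree_left _ _ _ _ hX1 =>
      cases hY with
      | leaf_node =>
        obtain ⟨Z₁', hr, hX', -⟩ := ih₁ (.node a X₁ X₂) hX1 hX1
        exact ⟨.node b Z₁' Z₂, by simp [TreeAutomaton.run, hr],
          .subtree_left _ _ _ _ hX', .leaf_node _ _ _⟩
      | subtree_left _ _ _ _ hY1 =>
        obtain ⟨Z₁', hr, hX', hY'⟩ := ih₁ Y hX1 hY1
        exact ⟨.node b Z₁' Z₂, by simp [TreeAutomaton.run, hr],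
          .subtree_left _ _ _ _ hX', .subtree_left _ _ _ _ hY'⟩
      | subtree_right _ _ _ _ hY2 =>
        obtain ⟨Z₁', hr, hX', -⟩ := ih₁ (.node a X₁ X₂) hX1 hX1
        exact ⟨.node b Z₁' Z₂, by simp [TreeAutomaton.run, hr],
          .subtree_left _ _ _ _ hX', .subtree_right _ _ _ _ hY2⟩
      | node_node _ Y₁ Y₂ _ _ hY1 hY2 =>
        obtain ⟨Z₁', hr, hX', hY1'⟩ := ih₁ Y₁ hX1 hY1
        exact ⟨.node b Z₁' Z₂, by simp [TreeAutomaton.run, hr],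
          .subtree_left _ _ _ _ hX', .node_node _ _ _ _ _ hY1' hY2⟩
      | node_node_swap _ Y₁ Y₂ _ _ hY1 hY2 =>
        obtain ⟨Z₁', hr, hX', hY2'⟩ := ih₁ Y₂ hX1 hY2
        exact ⟨.node b Z₁' Z₂, by simp [TreeAutomaton.run, hr],
          .subtree_left _ _ _ _ hX', .node_node_swap _ _ _ _ _ hY1 hY2'⟩
    | subtree_right _ _ _ _ hX2 =>
      cases hY with
      | leaf_node =>
        obtain ⟨Z₂', hr, hX', -⟩ := ih₂ (.node a X₁ X₂) hX2 hX2
        exact ⟨.node b Z₁ Z₂', by simp [TreeAutomaton.run, hr],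
          .subtree_right _ _ _ _ hX', .leaf_node _ _ _⟩
      | subtree_left _ _ _ _ hY1 =>
        obtain ⟨Z₂', hr, hX', -⟩ := ih₂ (.node a X₁ X₂) hX2 hX2
        exact ⟨.node b Z₁ Z₂', by simp [TreeAutomaton.run, hr],
          .subtree_right _ _ _ _ hX', .subtree_left _ _ _ _ hY1⟩
      | subtree_right _ _ _ _ hY2 =>
        obtain ⟨Z₂', hr, hX', hY'⟩ := ih₂ Y hX2 hY2
        exact ⟨.node b Z₁ Z₂', by simp [TreeAutomaton.run, hr],
          .subtree_right _ _ _ _ hX', .subtree_right _ _ _ _ hY'⟩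
      | node_node _ Y₁ Y₂ _ _ hY1 hY2 =>
        obtain ⟨Z₂', hr, hX', hY2'⟩ := ih₂ Y₂ hX2 hY2
        exact ⟨.node b Z₁ Z₂', by simp [TreeAutomaton.run, hr],
          .subtree_right _ _ _ _ hX', .node_node _ _ _ _ _ hY1 hY2'⟩
      | node_node_swap _ Y₁ Y₂ _ _ hY1 hY2 =>
        obtain ⟨Z₂', hr, hX', hY1'⟩ := ih₂ Y₁ hX2 hY1
        exact ⟨.node b Z₁ Z₂', by simp [TreeAutomaton.run, hr],
          .subtree_right _ _ _ _ hX', .node_node_swap _ _ _ _ _ hY1' hY2⟩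
    | node_node _ _ _ _ _ hXa hXb =>
      -- b = a, X₁ ≼ Z₁, X₂ ≼ Z₂
      cases hY with
      | leaf_node =>
        obtain ⟨Z₁', hr, hX', -⟩ := repl Z₁ X₁ hXa hXa
        exact ⟨.node a Z₁' Z₂, by simp [TreeAutomaton.run, hr],
          .node_node _ _ _ _ _ hX' hXb, .leaf_node _ _ _⟩
      | subtree_left _ _ _ _ hY1 =>
        obtain ⟨Z₁', hr, hX', hY'⟩ := repl Z₁ Y hXa hY1
        exact ⟨.node a Z₁' Z₂, by simp [TreeAutomaton.run, hr],
          .node_node _ _ _ _ _ hX' hXb, .subtree_left _ _ _ _ hY'⟩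
      | subtree_right _ _ _ _ hY2 =>
        obtain ⟨Z₁', hr, hX', -⟩ := repl Z₁ X₁ hXa hXa
        exact ⟨.node a Z₁' Z₂, by simp [TreeAutomaton.run, hr],
          .node_node _ _ _ _ _ hX' hXb, .subtree_right _ _ _ _ hY2⟩
      | node_node _ Y₁ Y₂ _ _ hY1 hY2 =>
        obtain ⟨Z₁', hr, hX', hY1'⟩ := repl Z₁ Y₁ hXa hY1
        exact ⟨.node a Z₁' Z₂, by simp [TreeAutomaton.run, hr],
          .node_node _ _ _ _ _ hX' hXb, .node_node _ _ _ _ _ hY1' hY2⟩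
      | node_node_swap _ Y₁ Y₂ _ _ hY1 hY2 =>
        obtain ⟨Z₁', hr, hX', hY2'⟩ := repl Z₁ Y₂ hXa hY2
        exact ⟨.node a Z₁' Z₂, by simp [TreeAutomaton.run, hr],
          .node_node _ _ _ _ _ hX' hXb, .node_node_swap _ _ _ _ _ hY1 hY2'⟩
    | node_node_swap _ _ _ _ _ hXa hXb =>
      -- b = a, X₁ ≼ Z₂, X₂ ≼ Z₁
      cases hY with
      | leaf_node =>
        obtain ⟨Z₂', hr, hX', -⟩ := repl Z₂ X₁ hXa hXa
        exact ⟨.node a Z₁ Z₂', by simp [TreeAutomaton.run, hr],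
          .node_node_swap _ _ _ _ _ hX' hXb, .leaf_node _ _ _⟩
      | subtree_left _ _ _ _ hY1 =>
        obtain ⟨Z₂', hr, hX', -⟩ := repl Z₂ X₁ hXa hXa
        exact ⟨.node a Z₁ Z₂', by simp [TreeAutomaton.run, hr],
          .node_node_swap _ _ _ _ _ hX' hXb, .subtree_left _ _ _ _ hY1⟩
      | subtree_right _ _ _ _ hY2 =>
        obtain ⟨Z₂', hr, hX', hY'⟩ := repl Z₂ Y hXa hY2
        exact ⟨.node a Z₁ Z₂', by simp [TreeAutomaton.run, hr],
          .node_node_swap _ _ _ _ _ hX' hXb, .subtree_right _ _ _ _ hY'⟩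
      | node_node _ Y₁ Y₂ _ _ hY1 hY2 =>
        obtain ⟨Z₂', hr, hX', hY2'⟩ := repl Z₂ Y₂ hXa hY2
        exact ⟨.node a Z₁ Z₂', by simp [TreeAutomaton.run, hr],
          .node_node_swap _ _ _ _ _ hX' hXb, .node_node _ _ _ _ _ hY1 hY2'⟩
      | node_node_swap _ Y₁ Y₂ _ _ hY1 hY2 =>
        obtain ⟨Z₂', hr, hX', hY1'⟩ := repl Z₂ Y₁ hXa hY1
        exact ⟨.node a Z₁ Z₂', by simp [TreeAutomaton.run, hr],
          .node_node_swap _ _ _ _ _ hX' hXb, .node_node_swap _ _ _ _ _ hY1' hY2⟩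

theorem Sset_cong_left {X₁ X₁' : LTree Λ} (X₂ : LTree Λ) (a : Λ)
    (hS : ∀ Y, Sset M X₁ Y = Sset M X₁' Y) (Y : LTree Λ) :
    Sset M (.node a X₁ X₂) Y = Sset M (.node a X₁' X₂) Y := by
  have half : ∀ (X₁ X₁' : LTree Λ), (∀ Y, Sset M X₁ Y = Sset M X₁' Y) →
      Sset M (.node a X₁ X₂) Y ⊆ Sset M (.node a X₁' X₂) Y := by
    intro X₁ X₁' hS
    rintro s ⟨Z, h1, h2, h3⟩
    obtain ⟨Z', e1, e2, e3⟩ := key_replace M hS Z Y h2 h3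
    exact ⟨Z', by rw [e1, h1], e2, e3⟩
  exact Set.Subset.antisymm (half X₁ X₁' hS) (half X₁' X₁ fun Y => (hS Y).symm)

theorem Sset_swap (a : Λ) (X₁ X₂ Y : LTree Λ) :
    Sset M (.node a X₁ X₂) Y = Sset M (.node a X₂ X₁) Y := by
  have h1 : TopCont (LTree.node a X₁ X₂) (.node a X₂ X₁) :=
    .node_node_swap _ _ _ _ _ (topCont_refl X₁) (topCont_refl X₂)
  have h2 : TopCont (LTree.node a X₂ X₁) (.node a X₁ X₂) :=
    .node_node_swap _ _ _ _ _ (topCont_refl X₂) (topCont_refl X₁)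
  exact Set.Subset.antisymm (Sset_anti_left M h2 Y) (Sset_anti_left M h1 Y)

/-- the semantic profile of a tree. -/
def dataF (X : LTree Λ) : M.State × (LTree Λ → Set M.State) :=
  (M.run X, fun Y => Sset M X Y)

theorem dataF_congr {X₁ X₁' X₂ X₂' : LTree Λ} (a : Λ)
    (h₁ : dataF M X₁ = dataF M X₁') (h₂ : dataF M X₂ = dataF M X₂') :
    dataF M (.node a X₁ X₂) = dataF M (.node a X₁' X₂') := by
  have hr₁ : M.run X₁ = M.run X₁' := congrArg Prod.fst h₁
  have hr₂ : M.run X₂ = M.run X₂' := congrArg Prod.fst h₂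
  have hs₁ : ∀ Y, Sset M X₁ Y = Sset M X₁' Y := fun Y => congrFun (congrArg Prod.snd h₁) Y
  have hs₂ : ∀ Y, Sset M X₂ Y = Sset M X₂' Y := fun Y => congrFun (congrArg Prod.snd h₂) Y
  refine Prod.ext ?_ ?_
  · show M.run (.node a X₁ X₂) = M.run (.node a X₁' X₂')
    simp [TreeAutomaton.run, hr₁, hr₂]
  · funext Y
    calc Sset M (.node a X₁ X₂) Y
        = Sset M (.node a X₁' X₂) Y := Sset_cong_left M X₂ a hs₁ Y
      _ = Sset M (.node a X₂ X₁') Y := Sset_swap M a X₁' X₂ Y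
      _ = Sset M (.node a X₂' X₁') Y := Sset_cong_left M X₁' a hs₂ Y
      _ = Sset M (.node a X₁' X₂') Y := Sset_swap M a X₂' X₁' Y

theorem dataF_swap (a : Λ) (X₁ X₂ : LTree Λ) :
    dataF M (.node a X₁ X₂) = dataF M (.node a X₂ X₁) := by
  refine Prod.ext ?_ ?_
  · show M.run (.node a X₁ X₂) = M.run (.node a X₂ X₁)
    simp [TreeAutomaton.run, M.m2_comm]
  · funext Y
    exact Sset_swap M a X₁ X₂ Y

theorem finite_range_dataF [Fintype Λ] : (Set.range (dataF M)).Finite := by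
  classical
  haveI := M.fintypeState
  have hfin : (Set.range fun X : LTree Λ => (fun Y => Sset M X Y)).Finite := by
    by_contra hinf
    rw [← Set.not_infinite, not_not] at hinf
    let e := hinf.natEmbedding
    choose Xs hXs using fun i => (e i).2
    obtain ⟨g, hg⟩ := topCont_pwo.exists_monotone_subseq (f := Xs) (fun _ => trivial)
    set F : ℕ → LTree Λ → Set M.State := fun i => fun Y => Sset M (Xs (g i)) Y with hF
    have hdec : ∀ i j : ℕ, i ≤ j → ∀ Y, F j Y ⊆ F i Y := by
      intro i j hij Y
      exact Sset_anti_left M (hg i j hij) Y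
    have hne : ∀ i j : ℕ, i ≠ j → F i ≠ F j := by
      intro i j hij hc
      have : (e (g i) : LTree Λ → Set M.State) = (e (g j) : LTree Λ → Set M.State) := by
        rw [← hXs (g i), ← hXs (g j)]
        exact hc
      exact hij (g.injective (e.injective (Subtype.ext this)))
    have hW : ∀ i : ℕ, ∃ Y s, s ∈ F i Y ∧ s ∉ F (i + 1) Y := by
      intro i
      by_contra hcon
      push_neg at hcon
      refine hne i (i + 1) (by omega) ?_
      funext Y
      refine Set.Subset.antisymm ?_ (hdec i (i + 1) (by omega) Y)
      intro s hs
      exact hcon Y s hs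
    choose Ys ss hmem hnot using hW
    -- product pwo to find i < j with TopCont (Ys i) (Ys j) and ss i = ss j
    have huniv : (Set.univ : Set M.State).PartiallyWellOrderedOn (· = ·) :=
      Set.Finite.partiallyWellOrderedOn Set.finite_univ
    have hprod := (topCont_pwo (Λ := Λ)).prod huniv
    obtain ⟨i, j, hij, hr1, hr2⟩ := hprod.exists_lt (f := fun i => (Ys i, ss i))
      (fun i => Set.mk_mem_prod trivial trivial)
    have h1 : ss j ∈ F j (Ys j) := hmem j
    have h2 : ss j ∈ F j (Ys i) := Sset_anti_right M _ hr1 h1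
    have h3 : ss j ∈ F (i + 1) (Ys i) := hdec (i + 1) j (by omega) _ h2
    simp only [] at hr1 hr2
    rw [← hr2] at h3
    exact hnot i h3
  have : Set.range (dataF M) ⊆
      (Set.univ : Set M.State) ×ˢ (Set.range fun X : LTree Λ => (fun Y => Sset M X Y)) := by
    rintro _ ⟨X, rfl⟩
    exact Set.mk_mem_prod trivial ⟨X, rfl⟩
  exact Set.Finite.subset (Set.Finite.prod Set.finite_univ hfin) this

end BadAux


namespace BadAux
variable {Λ : Type} (M : TreeAutomaton Λ)

noncomputable def rep (d : ↥(Set.range (dataF M))) : LTree Λ := d.2.choose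

theorem dataF_rep (d : ↥(Set.range (dataF M))) : dataF M (rep M d) = (d : _) := d.2.choose_spec

theorem semibad_comm (L : Set (LTree Λ)) (X Y : LTree Λ) :
    Semibad L X Y ↔ Semibad L Y X := by
  unfold Semibad
  constructor <;> (intro h ⟨Z, h1, h2, h3⟩; exact h ⟨Z, h1, h3, h2⟩)

variable (L : Set (LTree Λ))

def GoodProp (d₁ d₂ : ↥(Set.range (dataF M))) : Prop :=
  rep M d₁ ∈ L ∧ rep M d₂ ∈ L ∧ Semibad L (rep M d₁) (rep M d₂)

theorem goodProp_comm (d₁ d₂ : ↥(Set.range (dataF M))) :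
    GoodProp M L d₁ d₂ ↔ GoodProp M L d₂ d₁ := by
  unfold GoodProp
  rw [semibad_comm]
  tauto

/-- The automaton recognizing the bad-pair language. -/
noncomputable def BadAut [Fintype Λ] : TreeAutomaton (Option Λ) where
  State := ↥(Set.range (dataF M)) ⊕ Bool
  fintypeState := by
    haveI : Fintype ↥(Set.range (dataF M)) := (finite_range_dataF M).fintype
    infer_instance
  accept := {Sum.inr true}
  m0 := fun a => match a with
    | some a => Sum.inl ⟨dataF M (.leaf a), Set.mem_range_self _⟩
    | none => Sum.inr false
  m2 := fun a s t => match a, s, t with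
    | some a, Sum.inl d₁, Sum.inl d₂ =>
        Sum.inl ⟨dataF M (.node a (rep M d₁) (rep M d₂)), Set.mem_range_self _⟩
    | none, Sum.inl d₁, Sum.inl d₂ =>
        Sum.inr (@ite _ (GoodProp M L d₁ d₂) (Classical.propDecidable _) true false)
    | _, _, _ => Sum.inr false
  m2_comm := by
    intro a s t
    rcases a with _ | a <;> rcases s with d₁ | b₁ <;> rcases t with d₂ | b₂ <;>
      simp only [] <;> try rfl
    · refine congrArg Sum.inr ?_
      have hcomm := goodProp_comm M L d₁ d₂
      by_cases h : GoodProp M L d₁ d₂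
      · rw [if_pos h, if_pos (hcomm.1 h)]
      · rw [if_neg h, if_neg (fun c => h (hcomm.2 c))]
    · exact congrArg Sum.inl (Subtype.ext (dataF_swap M a (rep M d₁) (rep M d₂)))

variable [Fintype Λ]

theorem runB_relabel (X : LTree Λ) :
    (BadAut M L).run (LTree.relabel some X) = Sum.inl ⟨dataF M X, Set.mem_range_self X⟩ := by
  induction X with
  | leaf a => rfl
  | node a X₁ X₂ ih₁ ih₂ =>
    show (BadAut M L).m2 (some a) ((BadAut M L).run (LTree.relabel some X₁))
        ((BadAut M L).run (LTree.relabel some X₂)) = _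
    rw [ih₁, ih₂]
    exact congrArg Sum.inl (Subtype.ext
      (dataF_congr M a (dataF_rep M _) (dataF_rep M _)))

theorem runB_inl (T : LTree (Option Λ)) (d : ↥(Set.range (dataF M)))
    (h : (BadAut M L).run T = Sum.inl d) :
    ∃ X, T = LTree.relabel some X ∧ (d : _) = dataF M X := by
  induction T generalizing d with
  | leaf a =>
    rcases a with _ | a
    · exact absurd h (by simp [TreeAutomaton.run, BadAut])
    · refine ⟨.leaf a, rfl, ?_⟩
      have : (BadAut M L).run (.leaf (some a)) =
          Sum.inl ⟨dataF M (.leaf a), Set.mem_range_self _⟩ := rfl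
      rw [this] at h
      exact (congrArg Subtype.val (Sum.inl.inj h)).symm
  | node a T₁ T₂ ih₁ ih₂ =>
    have hrun : (BadAut M L).run (.node a T₁ T₂) =
        (BadAut M L).m2 a ((BadAut M L).run T₁) ((BadAut M L).run T₂) := rfl
    rw [hrun] at h
    rcases ha : (BadAut M L).run T₁ with d₁ | b₁ <;> rw [ha] at h <;>
      rcases hb : (BadAut M L).run T₂ with d₂ | b₂ <;> rw [hb] at h <;>
      rcases a with _ | a <;> simp only [BadAut] at h <;> try (simp at h; done)
    obtain ⟨X₁, rfl, hd₁⟩ := ih₁ d₁ ha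
    obtain ⟨X₂, rfl, hd₂⟩ := ih₂ d₂ hb
    refine ⟨.node a X₁ X₂, rfl, ?_⟩
    have := Sum.inl.inj h
    rw [← this]
    show dataF M (.node a (rep M d₁) (rep M d₂)) = _
    exact dataF_congr M a (by rw [dataF_rep, hd₁]) (by rw [dataF_rep, hd₂])

theorem semibad_iff (hM : ∀ T, T ∈ L ↔ M.Accepts T) (X Y : LTree Λ) :
    Semibad L X Y ↔ ∀ s ∈ Sset M X Y, s ∉ M.accept := by
  unfold Semibad
  constructor
  · rintro h s ⟨Z, rfl, h2, h3⟩ hacc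
    exact h ⟨Z, (hM Z).2 hacc, h2, h3⟩
  · rintro h ⟨Z, h1, h2, h3⟩
    exact h (M.run Z) ⟨Z, rfl, h2, h3⟩ ((hM Z).1 h1)

theorem mem_L_congr (hM : ∀ T, T ∈ L ↔ M.Accepts T) {X X' : LTree Λ}
    (h : dataF M X = dataF M X') : X ∈ L ↔ X' ∈ L := by
  rw [hM, hM]
  unfold TreeAutomaton.Accepts
  rw [show M.run X = M.run X' from congrArg Prod.fst h]

theorem semibad_congr (hM : ∀ T, T ∈ L ↔ M.Accepts T) {X X' Y Y' : LTree Λ}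
    (hx : dataF M X = dataF M X') (hy : dataF M Y = dataF M Y') :
    Semibad L X Y ↔ Semibad L X' Y' := by
  rw [semibad_iff M L hM, semibad_iff M L hM]
  have : Sset M X Y = Sset M X' Y' := by
    calc Sset M X Y = Sset M X' Y := congrFun (congrArg Prod.snd hx) Y
      _ = Sset M Y X' := Sset_comm M X' Y
      _ = Sset M Y' X' := congrFun (congrArg Prod.snd hy) X'
      _ = Sset M X' Y' := Sset_comm M Y' X'
  rw [this]

end BadAux

/-- if `L` is a regular tree language over a finite label set `Λ`, then the
language `B_L = { X # Y | X ∈ L, Y ∈ L, (X, Y) is L-semibad }` of `L`-bad pairs is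
regular over `Option Λ`. -/
theorem bad_pairs_regular {Λ : Type} [Fintype Λ] (L : Set (LTree Λ))
    (hL : IsRegularTreeLang L) :
    IsRegularTreeLang {W : LTree (Option Λ) |
      ∃ X Y : LTree Λ, X ∈ L ∧ Y ∈ L ∧ Semibad L X Y ∧ W = LTree.hash X Y} := by
  classical
  obtain ⟨M, hM⟩ := hL
  refine ⟨BadAux.BadAut M L, fun T => ?_⟩
  constructor
  · rintro ⟨X, Y, hX, hY, hsb, rfl⟩
    show (BadAux.BadAut M L).run (LTree.hash X Y) ∈ _
    have hrun : (BadAux.BadAut M L).run (LTree.hash X Y) =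
        (BadAux.BadAut M L).m2 none ((BadAux.BadAut M L).run (X.relabel some))
          ((BadAux.BadAut M L).run (Y.relabel some)) := rfl
    rw [hrun, BadAux.runB_relabel M L X, BadAux.runB_relabel M L Y]
    set dX : ↥(Set.range (BadAux.dataF M)) := ⟨BadAux.dataF M X, Set.mem_range_self X⟩
    set dY : ↥(Set.range (BadAux.dataF M)) := ⟨BadAux.dataF M Y, Set.mem_range_self Y⟩
    have hx : BadAux.dataF M X = BadAux.dataF M (BadAux.rep M dX) :=
      (BadAux.dataF_rep M dX).symm
    have hy : BadAux.dataF M Y = BadAux.dataF M (BadAux.rep M dY) :=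
      (BadAux.dataF_rep M dY).symm
    have hG : BadAux.GoodProp M L dX dY :=
      ⟨(BadAux.mem_L_congr M L hM hx).1 hX, (BadAux.mem_L_congr M L hM hy).1 hY,
        (BadAux.semibad_congr M L hM hx hy).1 hsb⟩
    show Sum.inr (@ite _ (BadAux.GoodProp M L dX dY) (Classical.propDecidable _) true false) ∈
      ({Sum.inr true} : Set ((BadAux.BadAut M L).State))
    rw [if_pos hG]
    rfl
  · intro hacc
    have h : (BadAux.BadAut M L).run T = Sum.inr true := hacc
    cases T with
    | leaf a =>
      rcases a with _ | a
      · exact absurd (Sum.inr.inj h) (by simp)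
      · exact (Sum.inl_ne_inr h).elim
    | node a T₁ T₂ =>
      have hrun : (BadAux.BadAut M L).run (.node a T₁ T₂) =
          (BadAux.BadAut M L).m2 a ((BadAux.BadAut M L).run T₁)
            ((BadAux.BadAut M L).run T₂) := rfl
      rw [hrun] at h
      rcases ha : (BadAux.BadAut M L).run T₁ with d₁ | b₁ <;> rw [ha] at h <;>
        rcases hb : (BadAux.BadAut M L).run T₂ with d₂ | b₂ <;> rw [hb] at h <;>
        rcases a with _ | a <;> simp only [BadAux.BadAut] at h <;>
        (try (simp at h; done)) <;>
        (try exact absurd (Sum.inr.inj h) Bool.false_ne_true)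
      · -- the good case: none, inl d₁, inl d₂
        have hite : (@ite _ (BadAux.GoodProp M L d₁ d₂) (Classical.propDecidable _)
            (true : Bool) false) = true := Sum.inr.inj h
        have hG : BadAux.GoodProp M L d₁ d₂ := by
          by_contra hc
          rw [if_neg hc] at hite
          exact absurd hite (by simp)
        obtain ⟨X, rfl, hdx⟩ := BadAux.runB_inl M L T₁ d₁ ha
        obtain ⟨Y, rfl, hdy⟩ := BadAux.runB_inl M L T₂ d₂ hb
        have hx : BadAux.dataF M (BadAux.rep M d₁) = BadAux.dataF M X := by
          rw [BadAux.dataF_rep]; exact hdx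
        have hy : BadAux.dataF M (BadAux.rep M d₂) = BadAux.dataF M Y := by
          rw [BadAux.dataF_rep]; exact hdy
        exact ⟨X, Y, (BadAux.mem_L_congr M L hM hx).1 hG.1,
          (BadAux.mem_L_congr M L hM hy).1 hG.2.1,
          (BadAux.semibad_congr M L hM hx hy).1 hG.2.2, rfl⟩
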